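/- Let α be a Hausdorff topological space and I an admissible ideal on ℕ. If a sequence η : ℕ → α is I*-convergent to x ∈ α and also I*-convergent to y ∈ α, then x = y. -/

import Mathlib

/-- An ideal on ℕ: a collection of subsets of ℕ containing ∅,
closed under subsets and finite unions. -/
structure IsIdeal (I : Set (Set ℕ)) : Prop where
  empty_mem : (∅ : Set ℕ) ∈ I
  subset_mem : ∀ {A B : Set ℕ}, A ∈ I → B ⊆ A → B ∈ I
  union_mem : ∀ {A B : Set ℕ}, A ∈ I → B ∈ I → A ∪ B ∈ I

/-- A non-trivial ideal: an ideal with I ≠ {∅} and ℕ ∉ I. -/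
def IsNonTrivialIdeal (I : Set (Set ℕ)) : Prop :=
  IsIdeal I ∧ I ≠ {∅} ∧ (Set.univ : Set ℕ) ∉ I

/-- An admissible ideal: a non-trivial ideal containing every singleton. -/
def IsAdmissibleIdeal (I : Set (Set ℕ)) : Prop :=
  IsNonTrivialIdeal I ∧ ∀ n : ℕ, ({n} : Set ℕ) ∈ I

variable {α : Type*} [TopologicalSpace α]

/-- A sequence η is I-convergent to x if for every neighborhood U of x,
the set {n | η n ∉ U} belongs to I. -/
def IConv (I : Set (Set ℕ)) (η : ℕ → α) (x : α) : Prop :=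
  ∀ U ∈ nhds x, {n : ℕ | η n ∉ U} ∈ I

/-- A sequence η is I*-convergent to x if there is P ⊆ ℕ with ℕ \ P ∈ I such that
the subsequence indexed by P converges to x (for every neighborhood U of x,
{n ∈ P | η n ∉ U} is finite). -/
def IStarConv (I : Set (Set ℕ)) (η : ℕ → α) (x : α) : Prop :=
  ∃ P : Set ℕ, Pᶜ ∈ I ∧ ∀ U ∈ nhds x, {n : ℕ | n ∈ P ∧ η n ∉ U}.Finite

/-- x is an I-limit point of η if there exists P ∉ I such that the subsequence
of η indexed by P converges to x. -/
def IsILimitPt (I : Set (Set ℕ)) (η : ℕ → α) (x : α) : Prop :=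
  ∃ P : Set ℕ, P ∉ I ∧ ∀ U ∈ nhds x, {n : ℕ | n ∈ P ∧ η n ∉ U}.Finite

/-- x is an I-cluster point of η if for every neighborhood U of x,
{n | η n ∈ U} ∉ I. -/
def IsIClusterPt (I : Set (Set ℕ)) (η : ℕ → α) (x : α) : Prop :=
  ∀ U ∈ nhds x, {n : ℕ | η n ∈ U} ∉ I

/-- Condition (AP): for every countable family of pairwise disjoint sets in I there
is a countable family K with each symmetric difference Hᵢ Δ Kᵢ finite and ⋃ Kᵢ ∈ I. -/
def APCondition (I : Set (Set ℕ)) : Prop :=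
  ∀ H : ℕ → Set ℕ, (∀ i, H i ∈ I) → Pairwise (Function.onFun Disjoint H) →
    ∃ K : ℕ → Set ℕ, (∀ i, (symmDiff (H i) (K i)).Finite) ∧ (⋃ i, K i) ∈ I


lemma finite_mem_of_admissible {I : Set (Set ℕ)} (hI : IsAdmissibleIdeal I)
    {S : Set ℕ} (hS : S.Finite) : S ∈ I := by
  refine Set.Finite.induction_on (motive := fun s _ => s ∈ I) S hS hI.1.1.empty_mem ?_
  intro a s _ _ ih
  rw [Set.insert_eq]
  exact hI.1.1.union_mem (hI.2 _) ih

theorem stmt_4 [T2Space α] (I : Set (Set ℕ)) (hI : IsAdmissibleIdeal I)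
    (η : ℕ → α) (x y : α)
    (hx : IStarConv I η x) (hy : IStarConv I η y) :
    x = y := by
  by_contra hxy
  obtain ⟨U, V, hU, hV, hxU, hyV, hUV⟩ := t2_separation hxy
  obtain ⟨P, hPc, hP⟩ := hx
  obtain ⟨Q, hQc, hQ⟩ := hy
  have hPU := hP U (hU.mem_nhds hxU)
  have hQV := hQ V (hV.mem_nhds hyV)
  -- P ∩ Q is infinite
  have hinf : (P ∩ Q).Infinite := by
    intro hfin
    have h1 : (P ∩ Q) ∈ I := finite_mem_of_admissible hI hfin
    have h2 : (P ∩ Q)ᶜ ∈ I := by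
      rw [Set.compl_inter]
      exact hI.1.1.union_mem hPc hQc
    have : (Set.univ : Set ℕ) ∈ I := by
      have := hI.1.1.union_mem h1 h2
      rwa [Set.union_compl_self] at this
    exact hI.1.2.2 this
  have : P ∩ Q ⊆ {n : ℕ | n ∈ P ∧ η n ∉ U} ∪ {n : ℕ | n ∈ Q ∧ η n ∉ V} := by
    rintro n ⟨hnP, hnQ⟩
    by_cases h : η n ∈ U
    · right
      refine ⟨hnQ, fun hv => ?_⟩
      exact hUV.le_bot ⟨h, hv⟩
    · exact Or.inl ⟨hnP, h⟩
  exact hinf ((hPU.union hQV).subset this)
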